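/- Let H ∈ ℝ^{M×N}, y ∈ ℝ^M, and let λ_max, λ_min be the largest and smallest eigenvalues of HᵀH with λ_max > λ_min ≥ 0. Let P : ℝ^N → ℝ^N be Lipschitz-continuous with constant L < (λ_max + λ_min)/(λ_max − λ_min), and set γ = 2/(λ_max + λ_min). Then the map G(x) = P(x − γHᵀHx + γHᵀy) is a contraction on ℝ^N, and hence the sequence x_{k+1} = G(x_k) converges to the unique fixed point of G for every initialization x_0. -/

import Mathlib

open Matrix
open scoped RealInnerProductSpace

private lemma selfadj_norm_bound {E : Type*} [NormedAddCommGroup E]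
    [InnerProductSpace ℝ E] (A : E →ₗ[ℝ] E)
    (hsym : ∀ x y, ⟪A x, y⟫ = ⟪x, A y⟫) (c : ℝ)
    (hA : ∀ x, |⟪A x, x⟫| ≤ c * ‖x‖ ^ 2) (x : E) : ‖A x‖ ≤ c * ‖x‖ := by
  rcases eq_or_ne (A x) 0 with h0 | h0
  · have hx0 : 0 ≤ c * ‖x‖ := by
      rcases eq_or_ne x 0 with rfl | hx
      · simp
      · have h1 : (0:ℝ) ≤ c * ‖x‖ ^ 2 := by
          have := hA x
          simp only [h0] at this
          simpa using this
        have hc : 0 ≤ c := by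
          nlinarith [pow_pos (norm_pos_iff.mpr hx) 2]
        positivity
    simpa [h0] using hx0
  · have hAx : 0 < ‖A x‖ := norm_pos_iff.mpr h0
    have hx : x ≠ 0 := by rintro rfl; simp at h0
    have hxn : 0 < ‖x‖ := norm_pos_iff.mpr hx
    set t : ℝ := ‖x‖ / ‖A x‖ with ht
    have htpos : 0 < t := div_pos hxn hAx
    set y : E := t • A x with hy
    have hyn : ‖y‖ = ‖x‖ := by
      rw [hy, norm_smul, Real.norm_eq_abs, abs_of_pos htpos, ht,
        div_mul_cancel₀ _ (ne_of_gt hAx)]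
    -- polarization
    have hpol : 4 * ⟪A x, y⟫ = ⟪A (x + y), x + y⟫ - ⟪A (x - y), x - y⟫ := by
      simp only [map_add, map_sub, inner_add_left, inner_add_right,
        inner_sub_left, inner_sub_right]
      have h1 : ⟪A y, x⟫ = ⟪x, A y⟫ := real_inner_comm _ _
      have h2 : ⟪A x, y⟫ = ⟪x, A y⟫ := hsym x y
      linarith
    have hineq : 4 * ⟪A x, y⟫ ≤ 2 * c * (‖x‖ ^ 2 + ‖y‖ ^ 2) := by
      have h1 := (abs_le.mp (hA (x + y))).2
      have h2 := (neg_le.mp (abs_le.mp (hA (x - y))).1)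
      have hpar : ‖x + y‖ ^ 2 + ‖x - y‖ ^ 2 = 2 * (‖x‖ ^ 2 + ‖y‖ ^ 2) := by
        have := parallelogram_law_with_norm ℝ x y
        ring_nf
        ring_nf at this
        linarith
      calc 4 * ⟪A x, y⟫ = ⟪A (x + y), x + y⟫ - ⟪A (x - y), x - y⟫ := hpol
        _ ≤ c * ‖x + y‖ ^ 2 + c * ‖x - y‖ ^ 2 := by linarith
        _ = c * (‖x + y‖ ^ 2 + ‖x - y‖ ^ 2) := by ring
        _ = c * (2 * (‖x‖ ^ 2 + ‖y‖ ^ 2)) := by rw [hpar]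
        _ = 2 * c * (‖x‖ ^ 2 + ‖y‖ ^ 2) := by ring
    have hval : ⟪A x, y⟫ = ‖x‖ * ‖A x‖ := by
      rw [hy, real_inner_smul_right, real_inner_self_eq_norm_sq, ht]
      field_simp
    rw [hval, hyn] at hineq
    nlinarith

set_option maxHeartbeats 1000000 in
/-- If `P` is `L`-Lipschitz with `L < (λmax + λmin)/(λmax - λmin)` and
`γ = 2/(λmax + λmin)`, then `G x = P (x - γHᵀHx + γHᵀy)` is a contraction, and the
Picard iteration converges to the unique fixed point of `G` from any initialization. -/
theorem pgd_converges_to_unique_fixed_point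
    {M N : ℕ} (H : Matrix (Fin M) (Fin N) ℝ) (y : EuclideanSpace ℝ (Fin M))
    (lmin lmax : ℝ) (hmin : 0 ≤ lmin) (hlt : lmin < lmax)
    (hlo : ∀ x : EuclideanSpace ℝ (Fin N), lmin * ‖x‖ ^ 2 ≤ ‖Matrix.toEuclideanLin H x‖ ^ 2)
    (hhi : ∀ x : EuclideanSpace ℝ (Fin N), ‖Matrix.toEuclideanLin H x‖ ^ 2 ≤ lmax * ‖x‖ ^ 2)
    (P : EuclideanSpace ℝ (Fin N) → EuclideanSpace ℝ (Fin N))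
    (L : ℝ) (hL0 : 0 ≤ L) (hLip : ∀ x z, ‖P x - P z‖ ≤ L * ‖x - z‖)
    (hLlt : L < (lmax + lmin) / (lmax - lmin))
    (γ : ℝ) (hγ : γ = 2 / (lmax + lmin))
    (G : EuclideanSpace ℝ (Fin N) → EuclideanSpace ℝ (Fin N))
    (hG : ∀ x, G x = P (x - γ • Matrix.toEuclideanLin Hᵀ (Matrix.toEuclideanLin H x)
        + γ • Matrix.toEuclideanLin Hᵀ y)) :
    (∃ κ : ℝ, 0 ≤ κ ∧ κ < 1 ∧ ∀ x z, ‖G x - G z‖ ≤ κ * ‖x - z‖) ∧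
    ∃ xstar, G xstar = xstar ∧ (∀ w, G w = w → w = xstar) ∧
      ∀ x₀ : EuclideanSpace ℝ (Fin N),
        Filter.Tendsto (fun k => G^[k] x₀) Filter.atTop (nhds xstar) := by
  have hs : 0 < lmax + lmin := by linarith
  have hd : 0 < lmax - lmin := by linarith
  have hγpos : 0 < γ := by rw [hγ]; positivity
  set Hl : EuclideanSpace ℝ (Fin N) →ₗ[ℝ] EuclideanSpace ℝ (Fin M) :=
    Matrix.toEuclideanLin H with hHl
  set Ht : EuclideanSpace ℝ (Fin M) →ₗ[ℝ] EuclideanSpace ℝ (Fin N) :=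
    Matrix.toEuclideanLin Hᵀ with hHt
  have hadj : Ht = LinearMap.adjoint Hl := by
    rw [hHt, hHl, ← Matrix.toEuclideanLin_conjTranspose_eq_adjoint,
      Matrix.conjTranspose_eq_transpose_of_trivial]
  set A : EuclideanSpace ℝ (Fin N) →ₗ[ℝ] EuclideanSpace ℝ (Fin N) :=
    LinearMap.id - γ • (Ht.comp Hl) with hA
  have hAval : ∀ u v, ⟪A u, v⟫ = ⟪u, v⟫ - γ * ⟪Hl u, Hl v⟫ := by
    intro u v
    simp only [hA, LinearMap.sub_apply, LinearMap.id_apply, LinearMap.smul_apply,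
      LinearMap.comp_apply, inner_sub_left, real_inner_smul_left]
    rw [hadj, LinearMap.adjoint_inner_left]
  have hsym : ∀ u v, ⟪A u, v⟫ = ⟪u, A v⟫ := by
    intro u v
    have h1 := hAval u v
    have h2 := hAval v u
    have h3 : ⟪u, A v⟫ = ⟪A v, u⟫ := real_inner_comm _ _
    rw [h1, h3, h2, real_inner_comm v u, real_inner_comm (Hl v) (Hl u)]
  set κ₀ : ℝ := (lmax - lmin) / (lmax + lmin) with hκ₀
  have hκ₀pos : 0 < κ₀ := div_pos hd hs
  have hAbound : ∀ u, |⟪A u, u⟫| ≤ κ₀ * ‖u‖ ^ 2 := by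
    intro u
    have h1 : ⟪A u, u⟫ = ‖u‖ ^ 2 - γ * ‖Hl u‖ ^ 2 := by
      rw [hAval]
      rw [real_inner_self_eq_norm_sq, real_inner_self_eq_norm_sq]
    have e1 : γ * (lmin * ‖u‖ ^ 2) ≤ γ * ‖Hl u‖ ^ 2 :=
      mul_le_mul_of_nonneg_left (hlo u) hγpos.le
    have e2 : γ * ‖Hl u‖ ^ 2 ≤ γ * (lmax * ‖u‖ ^ 2) :=
      mul_le_mul_of_nonneg_left (hhi u) hγpos.le
    have k1 : 1 - γ * lmax = -κ₀ := by
      rw [hγ, hκ₀]; field_simp; try ring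
    have k2 : 1 - γ * lmin = κ₀ := by
      rw [hγ, hκ₀]; field_simp; try ring
    have k1' : (1 - γ * lmax) * ‖u‖ ^ 2 = -(κ₀ * ‖u‖ ^ 2) := by rw [k1]; try ring
    have k2' : (1 - γ * lmin) * ‖u‖ ^ 2 = κ₀ * ‖u‖ ^ 2 := by rw [k2]; try ring
    rw [h1, abs_le]
    constructor
    · nlinarith [e2, k1']
    · nlinarith [e1, k2']
  have hAnorm : ∀ u, ‖A u‖ ≤ κ₀ * ‖u‖ := selfadj_norm_bound A hsym κ₀ hAbound
  set κ : ℝ := L * κ₀ with hκ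
  have hκ0 : 0 ≤ κ := mul_nonneg hL0 (le_of_lt hκ₀pos)
  have hκ1 : κ < 1 := by
    have : L * κ₀ < ((lmax + lmin) / (lmax - lmin)) * κ₀ :=
      mul_lt_mul_of_pos_right hLlt hκ₀pos
    rw [hκ]
    calc L * κ₀ < ((lmax + lmin) / (lmax - lmin)) * ((lmax - lmin) / (lmax + lmin)) := this
    _ = 1 := by field_simp
  have hGlip : ∀ x z, ‖G x - G z‖ ≤ κ * ‖x - z‖ := by
    intro x z
    rw [hG x, hG z]
    have key : (x - γ • Ht (Hl x) + γ • Ht y) - (z - γ • Ht (Hl z) + γ • Ht y)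
        = A (x - z) := by
      simp only [hA, LinearMap.sub_apply, LinearMap.id_apply, LinearMap.smul_apply,
        LinearMap.comp_apply, map_sub, smul_sub]
      abel
    calc ‖P (x - γ • Ht (Hl x) + γ • Ht y) - P (z - γ • Ht (Hl z) + γ • Ht y)‖
        ≤ L * ‖(x - γ • Ht (Hl x) + γ • Ht y) - (z - γ • Ht (Hl z) + γ • Ht y)‖ :=
          hLip _ _
      _ = L * ‖A (x - z)‖ := by rw [key]
      _ ≤ L * (κ₀ * ‖x - z‖) := mul_le_mul_of_nonneg_left (hAnorm _) hL0
      _ = κ * ‖x - z‖ := by rw [hκ]; ring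
  refine ⟨⟨κ, hκ0, hκ1, hGlip⟩, ?_⟩
  have hlipW : LipschitzWith ⟨κ, hκ0⟩ G := by
    apply LipschitzWith.of_dist_le_mul
    intro x z
    rw [dist_eq_norm, dist_eq_norm]
    exact hGlip x z
  have hC : ContractingWith ⟨κ, hκ0⟩ G := ⟨by exact_mod_cast hκ1, hlipW⟩
  refine ⟨hC.fixedPoint G, hC.fixedPoint_isFixedPt, fun w hw => hC.fixedPoint_unique hw,
    fun x₀ => hC.tendsto_iterate_fixedPoint x₀⟩
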